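/- Stability of the minimizing commuting projection: In the setting where Π(u) is defined as the minimizer of ‖u − vₕ‖ over {vₕ ∈ Vₕ : d vₕ = P(d u)}, if the discrete inf-sup condition holds in the graph norm with constant β > 0 (for every nonzero t ∈ d(Vₕ), sup_{vₕ ∈ Vₕ} ⟨t, d vₕ⟩/(‖t‖·‖vₕ‖_graph) ≥ β, with ‖v‖_graph² = ‖v‖² + h²‖d v‖²), then ‖Π u‖_graph ≤ ‖u‖_graph + (2/β)·‖d u‖ for all u ∈ V. -/

import Mathlib

open scoped RealInnerProductSpace

set_option maxHeartbeats 1000000 in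
/-- Graph-norm stability of the minimizing commuting projection under the discrete
inf-sup condition in the graph norm (proof of Lemma 6.5). -/
theorem minimizing_commuting_projection_graph_stability
    {V W : Type*} [NormedAddCommGroup V] [InnerProductSpace ℝ V]
    [NormedAddCommGroup W] [InnerProductSpace ℝ W]
    [FiniteDimensional ℝ V] [FiniteDimensional ℝ W]
    (d : V →ₗ[ℝ] W) (Vh : Submodule ℝ V) (Wh : Submodule ℝ W)
    (hdVh : ∀ vh ∈ Vh, d vh ∈ Wh)
    (hPd : ∀ u : V, ((Wh.orthogonalProjection (d u) : W)) ∈ d '' (Vh : Set V))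
    (h β : ℝ) (hh : 0 < h) (hβ : 0 < β)
    -- discrete inf-sup condition in the graph norm
    (hIS : ∀ t ∈ d '' (Vh : Set V), t ≠ 0 →
      ∃ vh ∈ Vh, vh ≠ 0 ∧ ⟪t, d vh⟫ ≥
        β * (‖t‖ * Real.sqrt (‖vh‖ ^ 2 + h ^ 2 * ‖d vh‖ ^ 2)))
    (Pi : V → V)
    -- `Pi u` is the minimizer of `‖u - vh‖` over `{vh ∈ Vh : d vh = P (d u)}`
    (hmem : ∀ u : V, Pi u ∈ Vh)
    (hconstraint : ∀ u : V, d (Pi u) = (Wh.orthogonalProjection (d u) : W))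
    (hminimal : ∀ u : V, ∀ vh ∈ Vh, d vh = (Wh.orthogonalProjection (d u) : W) →
      ‖u - Pi u‖ ≤ ‖u - vh‖) :
    ∀ u : V, Real.sqrt (‖Pi u‖ ^ 2 + h ^ 2 * ‖d (Pi u)‖ ^ 2) ≤
      Real.sqrt (‖u‖ ^ 2 + h ^ 2 * ‖d u‖ ^ 2) + (2 / β) * ‖d u‖ := by
  intro u
  -- graph-norm embedding
  let Gl : V →ₗ[ℝ] WithLp 2 (V × W) :=
    (WithLp.linearEquiv 2 ℝ (V × W)).symm.toLinearMap ∘ₗ (LinearMap.prod LinearMap.id (h • d))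
  have hGfst : ∀ v : V, (Gl v).fst = v := fun v => rfl
  have hGsnd : ∀ v : V, (Gl v).snd = h • d v := fun v => rfl
  have hnorm : ∀ v : V, ‖Gl v‖ = Real.sqrt (‖v‖ ^ 2 + h ^ 2 * ‖d v‖ ^ 2) := by
    intro v
    rw [WithLp.prod_norm_eq_of_L2, hGfst, hGsnd, norm_smul, Real.norm_eq_abs,
      abs_of_pos hh, mul_pow]
  let S : Submodule ℝ (WithLp 2 (V × W)) := Vh.map Gl
  let T : Submodule ℝ W := Vh.map d
  let fstL : WithLp 2 (V × W) →ₗ[ℝ] V :=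
    (LinearMap.fst ℝ V W) ∘ₗ (WithLp.linearEquiv 2 ℝ (V × W)).toLinearMap
  have hBmem : ∀ x : S, d (fstL (x : WithLp 2 (V × W))) ∈ T := by
    rintro ⟨x, v, hv, rfl⟩
    exact ⟨v, hv, rfl⟩
  let B : S →ₗ[ℝ] T := ((d ∘ₗ fstL) ∘ₗ S.subtype).codRestrict T (fun x => hBmem x)
  let Bs := LinearMap.adjoint B
  have himg : (T : Set W) = d '' (Vh : Set V) := rfl
  -- Step 1: lower bound on the adjoint from the inf-sup condition
  have claim1 : ∀ t : T, β * ‖t‖ ≤ ‖Bs t‖ := by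
    intro t
    rcases eq_or_ne t 0 with rfl | ht
    · simp
    · have ht' : (t : W) ≠ 0 := fun hc => ht (Subtype.ext hc)
      obtain ⟨vh, hvhVh, hvhne, hineq⟩ := hIS (t : W) (by rw [← himg]; exact t.2) ht'
      set sv : S := ⟨Gl vh, Submodule.mem_map_of_mem hvhVh⟩ with hsv
      have hBsv : (B sv : W) = d vh := rfl
      have hsvnorm : ‖sv‖ = Real.sqrt (‖vh‖ ^ 2 + h ^ 2 * ‖d vh‖ ^ 2) := hnorm vh
      have hsvpos : 0 < ‖sv‖ := by
        have hne : (sv : WithLp 2 (V × W)) ≠ 0 := by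
          intro hc
          apply hvhne
          have := congrArg (fun x : WithLp 2 (V × W) => x.fst) hc
          simpa [hsv, hGfst] using this
        simpa using norm_pos_iff.mpr (fun hc => hne (congrArg Subtype.val hc))
      have h1 : ⟪t, B sv⟫ = ⟪(t : W), d vh⟫ := by rw [← hBsv]; rfl
      have h2 : ⟪Bs t, sv⟫ = ⟪t, B sv⟫ := LinearMap.adjoint_inner_left B sv t
      have h3 : ⟪Bs t, sv⟫ ≤ ‖Bs t‖ * ‖sv‖ := real_inner_le_norm _ _
      have h4 : β * (‖t‖ * ‖sv‖) ≤ ‖Bs t‖ * ‖sv‖ := by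
        calc β * (‖t‖ * ‖sv‖) = β * (‖(t : W)‖ * Real.sqrt (‖vh‖ ^ 2 + h ^ 2 * ‖d vh‖ ^ 2)) := by
              rw [hsvnorm]; rfl
          _ ≤ ⟪(t : W), d vh⟫ := hineq
          _ = ⟪Bs t, sv⟫ := by rw [h2, h1]
          _ ≤ ‖Bs t‖ * ‖sv‖ := h3
      exact (mul_le_mul_iff_left₀ hsvpos).mp (by linarith [h4] : (β * ‖t‖) * ‖sv‖ ≤ ‖Bs t‖ * ‖sv‖)
  -- Step 2: B ∘ Bs is surjective
  have hsurj : Function.Surjective (B ∘ₗ Bs) := by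
    rw [← LinearMap.injective_iff_surjective]
    intro s₁ s₂ hssp
    have hz : B (Bs (s₁ - s₂)) = 0 := by
      simp only [map_sub]
      simpa [sub_eq_zero] using hssp
    have hsq0 : ‖Bs (s₁ - s₂)‖ ^ 2 = 0 := by
      rw [← real_inner_self_eq_norm_sq, LinearMap.adjoint_inner_left, hz, inner_zero_right]
    have hBs0 : ‖Bs (s₁ - s₂)‖ = 0 :=
      pow_eq_zero_iff (n := 2) (by norm_num) |>.mp hsq0
    have hcl := claim1 (s₁ - s₂)
    rw [hBs0] at hcl
    have : ‖s₁ - s₂‖ = 0 := by nlinarith [norm_nonneg (s₁ - s₂)]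
    rwa [norm_eq_zero, sub_eq_zero] at this
  -- Step 3: construct wh with d wh = P (d u) and small graph norm
  have ht0mem : (Wh.orthogonalProjection (d u) : W) ∈ T := hPd u
  set t0 : T := ⟨(Wh.orthogonalProjection (d u) : W), ht0mem⟩ with ht0
  obtain ⟨s, hs⟩ := hsurj t0
  set w : S := Bs s with hw
  obtain ⟨wh, hwhVh, hwhGl⟩ := w.2
  have hfst : fstL (w : WithLp 2 (V × W)) = wh := by rw [← hwhGl]; rfl
  have hBwt : B w = t0 := by rw [hw, ← LinearMap.comp_apply]; exact hs
  have hBwd : (B w : W) = d wh := by rw [← hfst]; rfl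
  have hdwh : d wh = (Wh.orthogonalProjection (d u) : W) := by
    rw [← hBwd, hBwt]
  have hwGl : (w : WithLp 2 (V × W)) = Gl wh := hwhGl.symm
  have hwnorm : ‖w‖ = Real.sqrt (‖wh‖ ^ 2 + h ^ 2 * ‖d wh‖ ^ 2) := by
    show ‖(w : WithLp 2 (V × W))‖ = _
    rw [hwGl]; exact hnorm wh
  -- bound on ‖w‖
  have hwsq : ‖w‖ ^ 2 = ⟪s, t0⟫ := by
    rw [← real_inner_self_eq_norm_sq]
    calc ⟪w, w⟫ = ⟪Bs s, w⟫ := rfl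
      _ = ⟪s, B w⟫ := LinearMap.adjoint_inner_left B w s
      _ = ⟪s, t0⟫ := by rw [hBwt]
  have hwle : ‖w‖ ≤ ‖t0‖ / β := by
    rcases eq_or_lt_of_le (norm_nonneg w) with hw0 | hwpos
    · rw [← hw0]; positivity
    · have h1 : ‖w‖ ^ 2 ≤ ‖s‖ * ‖t0‖ := by
        rw [hwsq]; exact real_inner_le_norm s t0
      have h2 : β * ‖s‖ ≤ ‖w‖ := claim1 s
      have h3 : ‖s‖ ≤ ‖w‖ / β := by rw [le_div_iff₀ hβ]; linarith
      have h4 : ‖w‖ ^ 2 ≤ (‖w‖ / β) * ‖t0‖ :=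
        h1.trans (mul_le_mul_of_nonneg_right h3 (norm_nonneg _))
      rw [div_mul_eq_mul_div, le_div_iff₀ hβ] at h4
      rw [le_div_iff₀ hβ]
      have h5 : ‖w‖ * (‖w‖ * β) ≤ ‖w‖ * ‖t0‖ := by nlinarith [h4]
      exact (mul_le_mul_iff_right₀ hwpos).mp h5
  have ht0le : ‖(t0 : W)‖ ≤ ‖d u‖ := by
    have h1 : ‖Wh.orthogonalProjection (d u)‖ ≤ ‖d u‖ := by
      calc ‖Wh.orthogonalProjection (d u)‖ ≤ ‖Wh.orthogonalProjection‖ * ‖d u‖ :=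
            Wh.orthogonalProjection.le_opNorm (d u)
        _ ≤ 1 * ‖d u‖ := by
            apply mul_le_mul_of_nonneg_right (Wh.orthogonalProjection_norm_le) (norm_nonneg _)
        _ = ‖d u‖ := one_mul _
    exact h1
  -- Step 4: orthogonality of u - Pi u to the discrete kernel
  have horth : ∀ z ∈ Vh, d z = 0 → ⟪u - Pi u, z⟫ = 0 := by
    intro z hz hdz
    rcases eq_or_ne z 0 with rfl | hzne
    · simp
    · set c := ⟪u - Pi u, z⟫ with hc
      have hznorm : (0 : ℝ) < ‖z‖ ^ 2 := pow_pos (norm_pos_iff.mpr hzne) 2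
      set s₀ : ℝ := c / ‖z‖ ^ 2 with hs₀
      have hadm : Pi u + s₀ • z ∈ Vh := Vh.add_mem (hmem u) (Vh.smul_mem _ hz)
      have hd' : d (Pi u + s₀ • z) = (Wh.orthogonalProjection (d u) : W) := by
        rw [map_add, map_smul, hdz, smul_zero, add_zero, hconstraint]
      have hle := hminimal u (Pi u + s₀ • z) hadm hd'
      have hexp : ‖u - (Pi u + s₀ • z)‖ ^ 2
          = ‖u - Pi u‖ ^ 2 - 2 * (s₀ * c) + s₀ ^ 2 * ‖z‖ ^ 2 := by
        have hrw : u - (Pi u + s₀ • z) = (u - Pi u) - s₀ • z := by abel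
        rw [hrw, norm_sub_sq_real, real_inner_smul_right, norm_smul, Real.norm_eq_abs,
          mul_pow, sq_abs, ← hc]
      have hsq : ‖u - Pi u‖ ^ 2 ≤ ‖u - (Pi u + s₀ • z)‖ ^ 2 :=
        pow_le_pow_left₀ (norm_nonneg _) hle 2
      rw [hexp] at hsq
      have hkey : 2 * (s₀ * c) ≤ s₀ ^ 2 * ‖z‖ ^ 2 := by linarith
      rw [hs₀] at hkey
      have hcsq : c ^ 2 ≤ 0 := by
        have h5 : 2 * (c ^ 2 / ‖z‖ ^ 2) ≤ c ^ 2 / ‖z‖ ^ 2 := by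
          calc 2 * (c ^ 2 / ‖z‖ ^ 2) = 2 * (c / ‖z‖ ^ 2 * c) := by ring
            _ ≤ (c / ‖z‖ ^ 2) ^ 2 * ‖z‖ ^ 2 := hkey
            _ = c ^ 2 / ‖z‖ ^ 2 := by field_simp
        have h6 : c ^ 2 / ‖z‖ ^ 2 ≤ 0 := by linarith
        calc c ^ 2 = (c ^ 2 / ‖z‖ ^ 2) * ‖z‖ ^ 2 := by field_simp
          _ ≤ 0 := mul_nonpos_of_nonpos_of_nonneg h6 hznorm.le
      nlinarith [sq_nonneg c]
  -- Step 5: Pythagoras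
  set z := Pi u - wh with hz
  have hzVh : z ∈ Vh := Vh.sub_mem (hmem u) hwhVh
  have hdz : d z = 0 := by rw [hz, map_sub, hconstraint, hdwh, sub_self]
  have hinner0 : ⟪u - Pi u, z⟫ = 0 := horth z hzVh hdz
  have hpyth : ‖z‖ ≤ ‖u - wh‖ := by
    have hdecomp : u - wh = (u - Pi u) + z := by rw [hz]; abel
    have hsum : ‖u - wh‖ ^ 2 = ‖u - Pi u‖ ^ 2 + ‖z‖ ^ 2 := by
      rw [hdecomp, norm_add_sq_real, hinner0]; ring
    nlinarith [norm_nonneg (u - wh), norm_nonneg z, sq_nonneg (‖u - Pi u‖)]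
  -- Step 6: final chain
  have hwnorm' : ‖Gl wh‖ = ‖w‖ := by rw [hwnorm]; exact hnorm wh
  have hGlz : ‖Gl z‖ = ‖z‖ := by
    rw [hnorm z, hdz]
    simp [Real.sqrt_sq (norm_nonneg z)]
  have hwh_le : ‖wh‖ ≤ ‖w‖ := by
    rw [← hwnorm', hnorm wh]
    calc ‖wh‖ = Real.sqrt (‖wh‖ ^ 2) := (Real.sqrt_sq (norm_nonneg wh)).symm
      _ ≤ _ := Real.sqrt_le_sqrt (le_add_of_nonneg_right (by positivity))
  have hu_le : ‖u‖ ≤ ‖Gl u‖ := by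
    rw [hnorm u]
    calc ‖u‖ = Real.sqrt (‖u‖ ^ 2) := (Real.sqrt_sq (norm_nonneg u)).symm
      _ ≤ _ := Real.sqrt_le_sqrt (le_add_of_nonneg_right (by positivity))
  have ht0div : ‖w‖ ≤ ‖d u‖ / β := hwle.trans (by gcongr; exact ht0le)
  calc Real.sqrt (‖Pi u‖ ^ 2 + h ^ 2 * ‖d (Pi u)‖ ^ 2) = ‖Gl (Pi u)‖ := (hnorm _).symm
    _ = ‖Gl z + Gl wh‖ := by
        have hPieq : Pi u = z + wh := by rw [hz]; abel
        rw [hPieq, map_add]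
    _ ≤ ‖Gl z‖ + ‖Gl wh‖ := norm_add_le _ _
    _ = ‖z‖ + ‖w‖ := by rw [hGlz, hwnorm']
    _ ≤ ‖u - wh‖ + ‖w‖ := by linarith
    _ ≤ (‖u‖ + ‖wh‖) + ‖w‖ := by
        have := norm_sub_le u wh
        linarith
    _ ≤ (‖Gl u‖ + ‖w‖) + ‖w‖ := by linarith
    _ ≤ (‖Gl u‖ + ‖d u‖ / β) + ‖d u‖ / β := by linarith
    _ ≤ Real.sqrt (‖u‖ ^ 2 + h ^ 2 * ‖d u‖ ^ 2) + (2 / β) * ‖d u‖ := by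
        rw [hnorm u]
        have h2 : (2 / β) * ‖d u‖ = ‖d u‖ / β + ‖d u‖ / β := by ring
        linarith
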